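/- Each of the two ℂ-algebras R₂ = ℂ[S₁,S₂,S₃,S₄]/(S₁²−S₃, S₁S₂, S₂², S₁S₃−S₄, S₁S₄) and R₃′ = ℂ[S₁,S₂,S₃,S₄]/(S₁²−S₃, S₁S₂, S₂²−S₄, S₁S₃−S₄, S₂S₃, S₁S₄) is a commutative local ℂ-algebra R with dim_ℂ R = 5, dim_ℂ 𝔪_R = 4, dim_ℂ 𝔪_R² = 2 and dim_ℂ 𝔪_R³ = 1, where 𝔪_R is the maximal ideal. -/

import Mathlib

open MvPolynomial

/-- The ideal defining `R₂ = ℂ[S₁,S₂,S₃,S₄]/(S₁²−S₃, S₁S₂, S₂², S₁S₃−S₄, S₁S₄)`. -/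
noncomputable def I2 : Ideal (MvPolynomial (Fin 4) ℂ) :=
  Ideal.span {X 0 ^ 2 - X 2, X 0 * X 1, X 1 ^ 2, X 0 * X 2 - X 3, X 0 * X 3}

/-- The algebra `R₂`. -/
noncomputable abbrev R2 : Type := MvPolynomial (Fin 4) ℂ ⧸ I2

/-- The ideal defining `R₃′ = ℂ[S₁,S₂,S₃,S₄]/(S₁²−S₃, S₁S₂, S₂²−S₄, S₁S₃−S₄, S₂S₃, S₁S₄)`. -/
noncomputable def I3' : Ideal (MvPolynomial (Fin 4) ℂ) :=
  Ideal.span {X 0 ^ 2 - X 2, X 0 * X 1, X 1 ^ 2 - X 3, X 0 * X 2 - X 3, X 1 * X 2, X 0 * X 3}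

/-- The algebra `R₃′`. -/
noncomputable abbrev R3' : Type := MvPolynomial (Fin 4) ℂ ⧸ I3'


/-- Carrier of the model algebra. -/
def MM (_ : ℂ) : Type := Fin 5 → ℂ

namespace MM

variable {ε : ℂ}

noncomputable instance : AddCommGroup (MM ε) := inferInstanceAs (AddCommGroup (Fin 5 → ℂ))
noncomputable instance : Module ℂ (MM ε) := inferInstanceAs (Module ℂ (Fin 5 → ℂ))

noncomputable def mul' (ε : ℂ) (a b : Fin 5 → ℂ) : Fin 5 → ℂ :=
  ![a 0 * b 0,
    a 0 * b 1 + a 1 * b 0,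
    a 0 * b 2 + a 2 * b 0,
    a 0 * b 3 + a 1 * b 1 + a 3 * b 0,
    a 0 * b 4 + a 1 * b 3 + a 3 * b 1 + a 4 * b 0 + ε * (a 2 * b 2)]

noncomputable instance : Mul (MM ε) := ⟨fun a b => mul' ε a b⟩
noncomputable instance : One (MM ε) := ⟨![1,0,0,0,0]⟩

lemma mul_def (a b : MM ε) : a * b = mul' ε a b := rfl
lemma one_def : (1 : MM ε) = ![1,0,0,0,0] := rfl
lemma add_apply (a b : MM ε) (i : Fin 5) : (a + b) i = a i + b i := rfl
lemma zero_apply (i : Fin 5) : (0 : MM ε) i = 0 := rfl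
lemma smul_apply (c : ℂ) (a : MM ε) (i : Fin 5) : (c • a) i = c * a i := rfl

lemma mul_apply0 (a b : MM ε) : (a * b) 0 = a 0 * b 0 := rfl
lemma mul_apply1 (a b : MM ε) : (a * b) 1 = a 0 * b 1 + a 1 * b 0 := rfl
lemma mul_apply2 (a b : MM ε) : (a * b) 2 = a 0 * b 2 + a 2 * b 0 := rfl
lemma mul_apply3 (a b : MM ε) : (a * b) 3 = a 0 * b 3 + a 1 * b 1 + a 3 * b 0 := rfl
lemma mul_apply4 (a b : MM ε) :
    (a * b) 4 = a 0 * b 4 + a 1 * b 3 + a 3 * b 1 + a 4 * b 0 + ε * (a 2 * b 2) := rfl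

lemma ext5 {a b : MM ε} (h0 : a 0 = b 0) (h1 : a 1 = b 1) (h2 : a 2 = b 2)
    (h3 : a 3 = b 3) (h4 : a 4 = b 4) : a = b := by
  funext i
  fin_cases i <;> assumption

noncomputable instance : CommRing (MM ε) :=
  { (inferInstanceAs (AddCommGroup (MM ε)) : AddCommGroup (MM ε)) with
    mul := (· * ·)
    one := 1
    left_distrib := by
      intro a b c
      refine ext5 ?_ ?_ ?_ ?_ ?_ <;>
        simp only [mul_apply0, mul_apply1, mul_apply2, mul_apply3, mul_apply4, add_apply] <;> ring
    right_distrib := by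
      intro a b c
      refine ext5 ?_ ?_ ?_ ?_ ?_ <;>
        simp only [mul_apply0, mul_apply1, mul_apply2, mul_apply3, mul_apply4, add_apply] <;> ring
    zero_mul := by
      intro a
      refine ext5 ?_ ?_ ?_ ?_ ?_ <;>
        simp only [mul_apply0, mul_apply1, mul_apply2, mul_apply3, mul_apply4, zero_apply] <;> ring
    mul_zero := by
      intro a
      refine ext5 ?_ ?_ ?_ ?_ ?_ <;>
        simp only [mul_apply0, mul_apply1, mul_apply2, mul_apply3, mul_apply4, zero_apply] <;> ring
    mul_assoc := by
      intro a b c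
      refine ext5 ?_ ?_ ?_ ?_ ?_ <;>
        simp only [mul_apply0, mul_apply1, mul_apply2, mul_apply3, mul_apply4] <;> ring
    one_mul := by
      intro a
      refine ext5 ?_ ?_ ?_ ?_ ?_ <;>
        simp only [mul_apply0, mul_apply1, mul_apply2, mul_apply3, mul_apply4] <;> simp only [one_def] <;>
        simp [Matrix.cons_val_zero, Matrix.cons_val_one]
    mul_one := by
      intro a
      refine ext5 ?_ ?_ ?_ ?_ ?_ <;>
        simp only [mul_apply0, mul_apply1, mul_apply2, mul_apply3, mul_apply4] <;> simp only [one_def] <;>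
        simp
    mul_comm := by
      intro a b
      refine ext5 ?_ ?_ ?_ ?_ ?_ <;>
        simp only [mul_apply0, mul_apply1, mul_apply2, mul_apply3, mul_apply4] <;> ring }

noncomputable instance : Algebra ℂ (MM ε) :=
  Algebra.ofModule
    (by
      intro c a b
      refine ext5 ?_ ?_ ?_ ?_ ?_ <;>
        simp only [mul_apply0, mul_apply1, mul_apply2, mul_apply3, mul_apply4, smul_apply] <;> ring)
    (by
      intro c a b
      refine ext5 ?_ ?_ ?_ ?_ ?_ <;>
        simp only [mul_apply0, mul_apply1, mul_apply2, mul_apply3, mul_apply4, smul_apply] <;> ring)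

lemma algebraMap_apply (c : ℂ) : (algebraMap ℂ (MM ε)) c = c • (1 : MM ε) := rfl

end MM

namespace MM

variable {ε : ℂ}

noncomputable def v0 : MM ε := ![0,1,0,0,0]
noncomputable def v1 : MM ε := ![0,0,1,0,0]
noncomputable def v2 : MM ε := ![0,0,0,1,0]
noncomputable def v3 : MM ε := ![0,0,0,0,1]

/-- the coordinate maps as a linear map to `Fin n → ℂ` -/
noncomputable def proj (n : ℕ) (f : Fin n → Fin 5) : MM ε →ₗ[ℂ] (Fin n → ℂ) where
  toFun a := fun i => a (f i)
  map_add' a b := rfl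
  map_smul' c a := rfl

lemma one_apply0 : (1 : MM ε) 0 = 1 := rfl

lemma nilpotent_of_first_zero {a : MM ε} (h : a 0 = 0) : a ^ 4 = 0 := by
  have : a ^ 4 = ((a * a) * a) * a := by ring
  rw [this]
  refine ext5 ?_ ?_ ?_ ?_ ?_ <;>
    simp only [mul_apply0, mul_apply1, mul_apply2, mul_apply3, mul_apply4, zero_apply, h] <;> ring

lemma isUnit_of_first_ne_zero {a : MM ε} (h : a 0 ≠ 0) : IsUnit a := by
  have hn : IsNilpotent (a - algebraMap ℂ (MM ε) (a 0)) := by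
    refine ⟨4, nilpotent_of_first_zero ?_⟩
    show (a - algebraMap ℂ (MM ε) (a 0)) 0 = 0
    have : (algebraMap ℂ (MM ε) (a 0)) 0 = a 0 := by
      rw [algebraMap_apply]
      show a 0 * (1 : MM ε) 0 = a 0
      rw [one_apply0, mul_one]
    show a 0 - (algebraMap ℂ (MM ε) (a 0)) 0 = 0
    rw [this, sub_self]
  have hu : IsUnit (algebraMap ℂ (MM ε) (a 0)) := (isUnit_iff_ne_zero.2 h).map _
  have := hn.isUnit_add_right_of_commute hu (Commute.all _ _)
  simpa using this

lemma first_ne_zero_of_isUnit {a : MM ε} (h : IsUnit a) : a 0 ≠ 0 := by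
  obtain ⟨u, rfl⟩ := h
  have h1 : ((u : MM ε) * ((u⁻¹ : (MM ε)ˣ) : MM ε)) = 1 := u.mul_inv
  have h0 : ((u : MM ε) * ((u⁻¹ : (MM ε)ˣ) : MM ε)) 0 = 1 := by rw [h1]; rfl
  rw [mul_apply0] at h0
  intro hc
  rw [hc, zero_mul] at h0
  exact zero_ne_one h0

lemma isUnit_iff_first {a : MM ε} : IsUnit a ↔ a 0 ≠ 0 :=
  ⟨first_ne_zero_of_isUnit, isUnit_of_first_ne_zero⟩

instance : Nontrivial (MM ε) := by
  refine ⟨1, 0, fun hc => ?_⟩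
  have : (1 : MM ε) 0 = (0 : MM ε) 0 := by rw [hc]
  rw [one_apply0, zero_apply] at this
  exact one_ne_zero this

instance : IsLocalRing (MM ε) := by
  apply IsLocalRing.of_isUnit_or_isUnit_one_sub_self
  intro a
  by_cases h : a 0 = 0
  · right
    apply isUnit_of_first_ne_zero
    show (1 : MM ε) 0 - a 0 ≠ 0
    rw [h, one_apply0, sub_zero]
    exact one_ne_zero
  · exact Or.inl (isUnit_of_first_ne_zero h)

lemma mem_maximalIdeal_iff {a : MM ε} :
    a ∈ IsLocalRing.maximalIdeal (MM ε) ↔ a 0 = 0 := by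
  rw [IsLocalRing.mem_maximalIdeal, mem_nonunits_iff, isUnit_iff_first, not_not]

end MM

namespace MM

variable {ε : ℂ}

noncomputable def toPi : MM ε ≃ₗ[ℂ] (Fin 5 → ℂ) :=
  { toFun := fun a => a
    invFun := fun a => a
    map_add' := fun _ _ => rfl
    map_smul' := fun _ _ => rfl
    left_inv := fun _ => rfl
    right_inv := fun _ => rfl }

instance : Module.Finite ℂ (MM ε) := Module.Finite.equiv (toPi (ε := ε)).symm

lemma finrank_MM : Module.finrank ℂ (MM ε) = 5 := by
  rw [(toPi (ε := ε)).finrank_eq]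
  simp

/-- computation of the finrank of the kernel of a projection -/
lemma finrank_ker_proj (n : ℕ) (f : Fin n → Fin 5)
    (hs : Function.Surjective (proj (ε := ε) n f)) :
    Module.finrank ℂ (LinearMap.ker (proj (ε := ε) n f)) = 5 - n := by
  have h := LinearMap.finrank_range_add_finrank_ker (proj (ε := ε) n f)
  rw [LinearMap.range_eq_top.2 hs, finrank_top, finrank_MM] at h
  have : Module.finrank ℂ (Fin n → ℂ) = n := by simp
  omega

lemma surj_proj1 : Function.Surjective (proj (ε := ε) 1 ![0]) := by
  intro c
  refine ⟨![c 0, 0, 0, 0, 0], ?_⟩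
  funext i
  fin_cases i <;> rfl

lemma surj_proj3 : Function.Surjective (proj (ε := ε) 3 ![0, 1, 2]) := by
  intro c
  refine ⟨![c 0, c 1, c 2, 0, 0], ?_⟩
  funext i
  fin_cases i <;> rfl

lemma surj_proj4 : Function.Surjective (proj (ε := ε) 4 ![0, 1, 2, 3]) := by
  intro c
  refine ⟨![c 0, c 1, c 2, c 3, 0], ?_⟩
  funext i
  fin_cases i <;> rfl

lemma mem_ker_proj1 {a : MM ε} : a ∈ LinearMap.ker (proj (ε := ε) 1 ![0]) ↔ a 0 = 0 := by
  constructor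
  · intro h
    have := congrFun (LinearMap.mem_ker.1 h) 0
    exact this
  · intro h
    rw [LinearMap.mem_ker]
    funext i
    fin_cases i
    exact h

lemma mem_ker_proj3 {a : MM ε} :
    a ∈ LinearMap.ker (proj (ε := ε) 3 ![0, 1, 2]) ↔ a 0 = 0 ∧ a 1 = 0 ∧ a 2 = 0 := by
  constructor
  · intro h
    refine ⟨congrFun (LinearMap.mem_ker.1 h) 0, congrFun (LinearMap.mem_ker.1 h) 1,
      congrFun (LinearMap.mem_ker.1 h) 2⟩
  · intro ⟨h0, h1, h2⟩
    rw [LinearMap.mem_ker]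
    funext i
    fin_cases i <;> simpa

lemma mem_ker_proj4 {a : MM ε} :
    a ∈ LinearMap.ker (proj (ε := ε) 4 ![0, 1, 2, 3]) ↔
      a 0 = 0 ∧ a 1 = 0 ∧ a 2 = 0 ∧ a 3 = 0 := by
  constructor
  · intro h
    exact ⟨congrFun (LinearMap.mem_ker.1 h) 0, congrFun (LinearMap.mem_ker.1 h) 1,
      congrFun (LinearMap.mem_ker.1 h) 2, congrFun (LinearMap.mem_ker.1 h) 3⟩
  · intro ⟨h0, h1, h2, h3⟩
    rw [LinearMap.mem_ker]
    funext i
    fin_cases i <;> simpa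

end MM

namespace MM

variable {ε : ℂ}

lemma v0_mem : (v0 : MM ε) ∈ IsLocalRing.maximalIdeal (MM ε) := by
  rw [mem_maximalIdeal_iff]; rfl

lemma v2_mem : (v2 : MM ε) ∈ IsLocalRing.maximalIdeal (MM ε) := by
  rw [mem_maximalIdeal_iff]; rfl

lemma v0_mul_v0 : (v0 : MM ε) * v0 = v2 := by
  refine ext5 ?_ ?_ ?_ ?_ ?_ <;>
    simp only [mul_apply0, mul_apply1, mul_apply2, mul_apply3, mul_apply4] <;> simp only [v0, v2] <;>
    simp

lemma v2_mul_v0 : (v2 : MM ε) * v0 = v3 := by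
  refine ext5 ?_ ?_ ?_ ?_ ?_ <;>
    simp only [mul_apply0, mul_apply1, mul_apply2, mul_apply3, mul_apply4] <;> simp only [v0, v2, v3] <;>
    simp

lemma v2_mem_sq : (v2 : MM ε) ∈ (IsLocalRing.maximalIdeal (MM ε)) ^ 2 := by
  rw [pow_two, ← v0_mul_v0]
  exact Ideal.mul_mem_mul v0_mem v0_mem

lemma v3_mem_sq : (v3 : MM ε) ∈ (IsLocalRing.maximalIdeal (MM ε)) ^ 2 := by
  rw [pow_two, ← v2_mul_v0]
  exact Ideal.mul_mem_mul v2_mem v0_mem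

lemma v3_mem_cube : (v3 : MM ε) ∈ (IsLocalRing.maximalIdeal (MM ε)) ^ 3 := by
  rw [pow_succ, ← v2_mul_v0]
  exact Ideal.mul_mem_mul v2_mem_sq v0_mem

lemma mem_sq_iff {a : MM ε} :
    a ∈ (IsLocalRing.maximalIdeal (MM ε)) ^ 2 ↔ a 0 = 0 ∧ a 1 = 0 ∧ a 2 = 0 := by
  constructor
  · intro h
    rw [pow_two] at h
    refine Submodule.mul_induction_on h ?_ ?_
    · intro r hr s hs
      rw [mem_maximalIdeal_iff] at hr hs
      refine ⟨?_, ?_, ?_⟩ <;>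
        simp only [mul_apply0, mul_apply1, mul_apply2, hr, hs] <;> ring
    · rintro x y ⟨x0, x1, x2⟩ ⟨y0, y1, y2⟩
      refine ⟨?_, ?_, ?_⟩ <;> simp only [add_apply, x0, x1, x2, y0, y1, y2, add_zero]
  · intro ⟨h0, h1, h2⟩
    have ha : a = a 3 • (v2 : MM ε) + a 4 • v3 := by
      refine ext5 ?_ ?_ ?_ ?_ ?_ <;>
        simp only [add_apply, smul_apply, h0, h1, h2] <;> simp only [v2, v3] <;> simp
    rw [ha, Algebra.smul_def, Algebra.smul_def]
    exact Ideal.add_mem _ (Ideal.mul_mem_left _ _ v2_mem_sq) (Ideal.mul_mem_left _ _ v3_mem_sq)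

lemma mem_cube_iff {a : MM ε} :
    a ∈ (IsLocalRing.maximalIdeal (MM ε)) ^ 3 ↔
      a 0 = 0 ∧ a 1 = 0 ∧ a 2 = 0 ∧ a 3 = 0 := by
  constructor
  · intro h
    rw [pow_succ] at h
    refine Submodule.mul_induction_on h ?_ ?_
    · intro r hr s hs
      rw [mem_sq_iff] at hr
      obtain ⟨r0, r1, r2⟩ := hr
      rw [mem_maximalIdeal_iff] at hs
      refine ⟨?_, ?_, ?_, ?_⟩ <;>
        simp only [mul_apply0, mul_apply1, mul_apply2, mul_apply3, r0, r1, r2, hs] <;> ring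
    · rintro x y ⟨x0, x1, x2, x3⟩ ⟨y0, y1, y2, y3⟩
      refine ⟨?_, ?_, ?_, ?_⟩ <;>
        simp only [add_apply, x0, x1, x2, x3, y0, y1, y2, y3, add_zero]
  · intro ⟨h0, h1, h2, h3⟩
    have ha : a = a 4 • (v3 : MM ε) := by
      refine ext5 ?_ ?_ ?_ ?_ ?_ <;>
        simp only [smul_apply, h0, h1, h2, h3] <;> simp only [v3] <;> simp
    rw [ha, Algebra.smul_def]
    exact Ideal.mul_mem_left _ _ v3_mem_cube

lemma finrank_max : Module.finrank ℂ
    (Submodule.restrictScalars ℂ (IsLocalRing.maximalIdeal (MM ε))) = 4 := by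
  have : Submodule.restrictScalars ℂ (IsLocalRing.maximalIdeal (MM ε)) =
      LinearMap.ker (proj (ε := ε) 1 ![0]) := by
    ext a
    rw [Submodule.restrictScalars_mem, mem_maximalIdeal_iff, mem_ker_proj1]
  rw [this, finrank_ker_proj 1 ![0] surj_proj1]

lemma finrank_sq : Module.finrank ℂ
    (Submodule.restrictScalars ℂ ((IsLocalRing.maximalIdeal (MM ε)) ^ 2)) = 2 := by
  have : Submodule.restrictScalars ℂ ((IsLocalRing.maximalIdeal (MM ε)) ^ 2) =
      LinearMap.ker (proj (ε := ε) 3 ![0, 1, 2]) := by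
    ext a
    rw [Submodule.restrictScalars_mem, mem_sq_iff, mem_ker_proj3]
  rw [this, finrank_ker_proj 3 ![0, 1, 2] surj_proj3]

lemma finrank_cube : Module.finrank ℂ
    (Submodule.restrictScalars ℂ ((IsLocalRing.maximalIdeal (MM ε)) ^ 3)) = 1 := by
  have : Submodule.restrictScalars ℂ ((IsLocalRing.maximalIdeal (MM ε)) ^ 3) =
      LinearMap.ker (proj (ε := ε) 4 ![0, 1, 2, 3]) := by
    ext a
    rw [Submodule.restrictScalars_mem, mem_cube_iff, mem_ker_proj4]
  rw [this, finrank_ker_proj 4 ![0, 1, 2, 3] surj_proj4]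

end MM

namespace MM

variable {ε : ℂ}

lemma v0_mul_v1 : (v0 : MM ε) * v1 = 0 := by
  refine ext5 ?_ ?_ ?_ ?_ ?_ <;>
    simp only [mul_apply0, mul_apply1, mul_apply2, mul_apply3, mul_apply4, zero_apply] <;> simp only [v0, v1] <;>
    simp

lemma v1_mul_v1 : (v1 : MM ε) * v1 = ε • v3 := by
  refine ext5 ?_ ?_ ?_ ?_ ?_ <;>
    simp only [mul_apply0, mul_apply1, mul_apply2, mul_apply3, mul_apply4, smul_apply] <;> simp only [v1, v3] <;>
    simp

lemma v0_mul_v2 : (v0 : MM ε) * v2 = v3 := by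
  rw [mul_comm]; exact v2_mul_v0

lemma v1_mul_v2 : (v1 : MM ε) * v2 = 0 := by
  refine ext5 ?_ ?_ ?_ ?_ ?_ <;>
    simp only [mul_apply0, mul_apply1, mul_apply2, mul_apply3, mul_apply4, zero_apply] <;> simp only [v1, v2] <;>
    simp

lemma v0_mul_v3 : (v0 : MM ε) * v3 = 0 := by
  refine ext5 ?_ ?_ ?_ ?_ ?_ <;>
    simp only [mul_apply0, mul_apply1, mul_apply2, mul_apply3, mul_apply4, zero_apply] <;> simp only [v0, v3] <;>
    simp

lemma eq_lin (m : MM ε) :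
    m = m 0 • 1 + m 1 • v0 + m 2 • v1 + m 3 • v2 + m 4 • v3 := by
  refine ext5 ?_ ?_ ?_ ?_ ?_ <;>
    simp only [add_apply, smul_apply] <;> simp only [one_def, v0, v1, v2, v3] <;> simp

end MM

open MM in
/-- The family of ideals interpolating between `I2` (at `ε = 0`) and `I3'` (at `ε = 1`). -/
noncomputable def JJ (ε : ℂ) : Ideal (MvPolynomial (Fin 4) ℂ) :=
  Ideal.span {X 0 ^ 2 - X 2, X 0 * X 1, X 1 ^ 2 - C ε * X 3, X 0 * X 2 - X 3, X 1 * X 2,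
    X 0 * X 3}

section Jmem

variable {ε : ℂ}

lemma Jmem1 : (X 0 ^ 2 - X 2 : MvPolynomial (Fin 4) ℂ) ∈ JJ ε :=
  Ideal.subset_span (by left; rfl)
lemma Jmem2 : (X 0 * X 1 : MvPolynomial (Fin 4) ℂ) ∈ JJ ε :=
  Ideal.subset_span (by right; left; rfl)
lemma Jmem3 : (X 1 ^ 2 - C ε * X 3 : MvPolynomial (Fin 4) ℂ) ∈ JJ ε :=
  Ideal.subset_span (by right; right; left; rfl)
lemma Jmem4 : (X 0 * X 2 - X 3 : MvPolynomial (Fin 4) ℂ) ∈ JJ ε :=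
  Ideal.subset_span (by right; right; right; left; rfl)
lemma Jmem5 : (X 1 * X 2 : MvPolynomial (Fin 4) ℂ) ∈ JJ ε :=
  Ideal.subset_span (by right; right; right; right; left; rfl)
lemma Jmem6 : (X 0 * X 3 : MvPolynomial (Fin 4) ℂ) ∈ JJ ε :=
  Ideal.subset_span (by right; right; right; right; right; rfl)

end Jmem

lemma I2_eq_J0 : I2 = JJ 0 := by
  apply le_antisymm
  · rw [I2, Ideal.span_le]
    rintro p (rfl | rfl | rfl | rfl | rfl)
    · exact Jmem1
    · exact Jmem2
    · have h : (X 1 ^ 2 : MvPolynomial (Fin 4) ℂ) = X 1 ^ 2 - C (0 : ℂ) * X 3 := by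
        rw [map_zero, zero_mul, sub_zero]
      rw [h]; exact Jmem3
    · exact Jmem4
    · exact Jmem6
  · rw [JJ, Ideal.span_le]
    have m1 : (X 0 ^ 2 - X 2 : MvPolynomial (Fin 4) ℂ) ∈ I2 :=
      Ideal.subset_span (by left; rfl)
    have m2 : (X 0 * X 1 : MvPolynomial (Fin 4) ℂ) ∈ I2 :=
      Ideal.subset_span (by right; left; rfl)
    have m3 : (X 1 ^ 2 : MvPolynomial (Fin 4) ℂ) ∈ I2 :=
      Ideal.subset_span (by right; right; left; rfl)
    have m4 : (X 0 * X 2 - X 3 : MvPolynomial (Fin 4) ℂ) ∈ I2 :=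
      Ideal.subset_span (by right; right; right; left; rfl)
    have m6 : (X 0 * X 3 : MvPolynomial (Fin 4) ℂ) ∈ I2 :=
      Ideal.subset_span (by right; right; right; right; rfl)
    rintro p (rfl | rfl | rfl | rfl | rfl | rfl)
    · exact m1
    · exact m2
    · have h : (X 1 ^ 2 - C (0 : ℂ) * X 3 : MvPolynomial (Fin 4) ℂ) = X 1 ^ 2 := by
        rw [map_zero, zero_mul, sub_zero]
      rw [h]; exact m3
    · exact m4
    · have h : (X 1 * X 2 : MvPolynomial (Fin 4) ℂ) =
          X 0 * (X 0 * X 1) - X 1 * (X 0 ^ 2 - X 2) := by ring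
      rw [h]
      exact Ideal.sub_mem _ (Ideal.mul_mem_left _ _ m2) (Ideal.mul_mem_left _ _ m1)
    · exact m6

lemma I3'_eq_J1 : I3' = JJ 1 := by
  have h : (X 1 ^ 2 - C (1 : ℂ) * X 3 : MvPolynomial (Fin 4) ℂ) = X 1 ^ 2 - X 3 := by
    rw [map_one, one_mul]
  rw [I3', JJ, h]

open MM

variable {ε : ℂ}

/-- The evaluation points in the model. -/
noncomputable def vv (ε : ℂ) : Fin 4 → MM ε := ![v0, v1, v2, v3]

/-- The evaluation map to the model. -/
noncomputable def phi (ε : ℂ) : MvPolynomial (Fin 4) ℂ →ₐ[ℂ] MM ε := aeval (vv ε)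

set_option maxHeartbeats 1000000 in
lemma J_le_ker : ∀ p ∈ JJ ε, phi ε p = 0 := by
  have hs : JJ ε ≤ RingHom.ker (phi ε) := by
    rw [JJ]
    apply Ideal.span_le.2
    rintro p (rfl | rfl | rfl | rfl | rfl | rfl) <;>
      rw [SetLike.mem_coe, RingHom.mem_ker] <;>
      simp only [phi, map_sub, map_mul, map_pow, aeval_X, aeval_C, vv] <;>
      simp only [Matrix.cons_val_zero, Matrix.cons_val_one, Matrix.head_cons,
        Matrix.cons_val_two, Matrix.tail_cons, Matrix.cons_val_three]
    · rw [pow_two, v0_mul_v0, sub_self]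
    · rw [v0_mul_v1]
    · rw [pow_two, v1_mul_v1, ← Algebra.smul_def, sub_self]
    · rw [v0_mul_v2, sub_self]
    · rw [v1_mul_v2]
    · rw [v0_mul_v3]
  intro p hp
  exact RingHom.mem_ker.1 (hs hp)

/-- The induced map from the quotient to the model. -/
noncomputable def psi (ε : ℂ) : (MvPolynomial (Fin 4) ℂ ⧸ JJ ε) →ₐ[ℂ] MM ε :=
  Ideal.Quotient.liftₐ (JJ ε) (phi ε) J_le_ker

/-- linear lift of a model element to a polynomial -/
noncomputable def pa (m : MM ε) : MvPolynomial (Fin 4) ℂ :=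
  C (m 0) + C (m 1) * X 0 + C (m 2) * X 1 + C (m 3) * X 2 + C (m 4) * X 3

lemma iot_one : Ideal.Quotient.mk (JJ ε) (pa (1 : MM ε)) = 1 := by
  have h : pa (1 : MM ε) = 1 := by
    simp only [pa, one_def]
    simp
  rw [h, map_one]

lemma iot_zero : Ideal.Quotient.mk (JJ ε) (pa (0 : MM ε)) = 0 := by
  have h : pa (0 : MM ε) = 0 := by
    simp only [pa, zero_apply]
    simp
  rw [h, map_zero]

lemma iot_add (a b : MM ε) : Ideal.Quotient.mk (JJ ε) (pa (a + b)) =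
    Ideal.Quotient.mk (JJ ε) (pa a) + Ideal.Quotient.mk (JJ ε) (pa b) := by
  rw [← map_add]
  congr 1
  simp only [pa, add_apply, map_add]
  ring

set_option maxHeartbeats 1000000 in
lemma iot_mul (a b : MM ε) : Ideal.Quotient.mk (JJ ε) (pa (a * b)) =
    Ideal.Quotient.mk (JJ ε) (pa a) * Ideal.Quotient.mk (JJ ε) (pa b) := by
  rw [← map_mul, Ideal.Quotient.eq]
  have key : pa (a * b) - pa a * pa b =
      -((C (a 1 * b 1) - C (a 3 * b 3) * X 2 - C (a 3 * b 4 + a 4 * b 3) * X 3) *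
          (X 0 ^ 2 - X 2)
        + C (a 1 * b 2 + a 2 * b 1) * (X 0 * X 1)
        + C (a 2 * b 2) * (X 1 ^ 2 - C ε * X 3)
        + (C (a 1 * b 3 + a 3 * b 1) - C (a 2 * b 4 + a 4 * b 2) * X 1 + C (a 3 * b 3) * X 0
            - C (a 4 * b 4) * X 3) * (X 0 * X 2 - X 3)
        + (C (a 2 * b 3 + a 3 * b 2) + C (a 2 * b 4 + a 4 * b 2) * X 0) * (X 1 * X 2)
        + (C (a 1 * b 4 + a 4 * b 1) + C (a 3 * b 3) + C (a 3 * b 4 + a 4 * b 3) * X 0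
            + C (a 4 * b 4) * X 2) * (X 0 * X 3)) := by
    simp only [pa, mul_apply0, mul_apply1, mul_apply2, mul_apply3, mul_apply4,
      map_add, map_mul]
    ring
  rw [key]
  apply neg_mem
  refine Ideal.add_mem _ (Ideal.add_mem _ (Ideal.add_mem _ (Ideal.add_mem _ (Ideal.add_mem _
    ?_ ?_) ?_) ?_) ?_) ?_
  · exact Ideal.mul_mem_left _ _ Jmem1
  · exact Ideal.mul_mem_left _ _ Jmem2
  · exact Ideal.mul_mem_left _ _ Jmem3
  · exact Ideal.mul_mem_left _ _ Jmem4
  · exact Ideal.mul_mem_left _ _ Jmem5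
  · exact Ideal.mul_mem_left _ _ Jmem6

lemma iot_commutes (c : ℂ) : Ideal.Quotient.mk (JJ ε) (pa ((algebraMap ℂ (MM ε)) c)) =
    algebraMap ℂ (MvPolynomial (Fin 4) ℂ ⧸ JJ ε) c := by
  have h : pa ((algebraMap ℂ (MM ε)) c) = C c := by
    have h0 : ∀ i : Fin 5, ((algebraMap ℂ (MM ε)) c) i = c * (1 : MM ε) i := fun i => rfl
    simp only [pa, h0, one_def]
    simp
  rw [h]
  rfl

/-- The inverse algebra morphism. -/
noncomputable def iot (ε : ℂ) : MM ε →ₐ[ℂ] (MvPolynomial (Fin 4) ℂ ⧸ JJ ε) where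
  toFun m := Ideal.Quotient.mk (JJ ε) (pa m)
  map_one' := iot_one
  map_mul' := iot_mul
  map_zero' := iot_zero
  map_add' := iot_add
  commutes' := iot_commutes

lemma psi_iot (m : MM ε) : psi ε (iot ε m) = m := by
  have h1 : psi ε (iot ε m) = phi ε (pa m) := by
    simp only [iot, AlgHom.coe_mk, RingHom.coe_mk, MonoidHom.coe_mk, OneHom.coe_mk]
    rw [psi, Ideal.Quotient.liftₐ_apply]
    rfl
  have h2 : phi ε (pa m) =
      m 0 • (1 : MM ε) + m 1 • v0 + m 2 • v1 + m 3 • v2 + m 4 • v3 := by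
    simp only [pa, map_add, map_mul, phi, aeval_C, aeval_X, vv]
    simp only [Matrix.cons_val_zero, Matrix.cons_val_one, Matrix.head_cons,
      Matrix.cons_val_two, Matrix.tail_cons, Matrix.cons_val_three]
    rw [← Algebra.smul_def, ← Algebra.smul_def, ← Algebra.smul_def, ← Algebra.smul_def,
      Algebra.algebraMap_eq_smul_one]
  rw [h1, h2, ← eq_lin]

lemma iot_psi : (iot ε).comp (psi ε) = AlgHom.id ℂ (MvPolynomial (Fin 4) ℂ ⧸ JJ ε) := by
  apply Ideal.Quotient.algHom_ext
  apply MvPolynomial.algHom_ext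
  intro i
  simp only [AlgHom.coe_comp, Function.comp_apply, AlgHom.coe_id, id_eq,
    Ideal.Quotient.mkₐ_eq_mk]
  have hps : psi ε (Ideal.Quotient.mk (JJ ε) (X i)) = vv ε i := by
    rw [psi, Ideal.Quotient.liftₐ_apply]
    exact aeval_X _ i
  rw [hps]
  show Ideal.Quotient.mk (JJ ε) (pa (vv ε i)) = Ideal.Quotient.mk (JJ ε) (X i)
  congr 1
  fin_cases i <;>
    simp only [vv, Matrix.cons_val_zero, Matrix.cons_val_one, Matrix.head_cons,
      Matrix.cons_val_two, Matrix.tail_cons, Matrix.cons_val_three, pa, v0, v1, v2, v3] <;>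
    simp

/-- The quotient is isomorphic to the model. -/
noncomputable def eqv (ε : ℂ) : (MvPolynomial (Fin 4) ℂ ⧸ JJ ε) ≃ₐ[ℂ] MM ε :=
  AlgEquiv.ofAlgHom (psi ε) (iot ε) (AlgHom.ext psi_iot) iot_psi

section Transfer

variable {A B : Type} [CommRing A] [CommRing B] [Algebra ℂ A] [Algebra ℂ B]

lemma finrank_restrict_map (f : B ≃ₐ[ℂ] A) (K : Ideal B) :
    Module.finrank ℂ (Submodule.restrictScalars ℂ (Ideal.map ((f : B ≃+* A) : B →+* A) K)) =
      Module.finrank ℂ (Submodule.restrictScalars ℂ K) := by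
  have h : (Submodule.restrictScalars ℂ K).map (f.toLinearEquiv : B →ₗ[ℂ] A) =
      Submodule.restrictScalars ℂ (Ideal.map ((f : B ≃+* A) : B →+* A) K) := by
    ext a
    rw [Submodule.mem_map, Ideal.map_comap_of_equiv (f : B ≃+* A),
      Submodule.restrictScalars_mem, Ideal.mem_comap]
    constructor
    · rintro ⟨x, hx, rfl⟩
      show (f : B ≃+* A).symm ((f : B ≃+* A) x) ∈ K
      rw [RingEquiv.symm_apply_apply]
      exact hx
    · intro ha
      refine ⟨(f : B ≃+* A).symm a, ha, ?_⟩
      show (f : B ≃+* A) ((f : B ≃+* A).symm a) = a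
      exact RingEquiv.apply_symm_apply _ a
  exact (LinearEquiv.finrank_eq
    (LinearEquiv.ofSubmodules f.toLinearEquiv _ _ h)).symm

lemma isUnit_iff_equiv (f : B ≃ₐ[ℂ] A) {b : B} : IsUnit b ↔ IsUnit (f b) := by
  constructor
  · intro h
    exact h.map f
  · intro h
    have := h.map (f.symm : A →ₐ[ℂ] B)
    simpa using this

lemma map_maximalIdeal (f : B ≃ₐ[ℂ] A) [IsLocalRing A] [IsLocalRing B] :
    Ideal.map ((f : B ≃+* A) : B →+* A) (IsLocalRing.maximalIdeal B) = IsLocalRing.maximalIdeal A := by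
  ext a
  rw [Ideal.map_comap_of_equiv (f : B ≃+* A), Ideal.mem_comap]

  rw [IsLocalRing.mem_maximalIdeal, mem_nonunits_iff,
    IsLocalRing.mem_maximalIdeal, mem_nonunits_iff]
  rw [isUnit_iff_equiv f.symm]
  simp

end Transfer

lemma main (ε : ℂ) (I : Ideal (MvPolynomial (Fin 4) ℂ)) (hI : I = JJ ε) :
    ∃ h : IsLocalRing (MvPolynomial (Fin 4) ℂ ⧸ I),
      Module.finrank ℂ (MvPolynomial (Fin 4) ℂ ⧸ I) = 5 ∧
      Module.finrank ℂ
        (Submodule.restrictScalars ℂ (@IsLocalRing.maximalIdeal _ _ h)) = 4 ∧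
      Module.finrank ℂ
        (Submodule.restrictScalars ℂ ((@IsLocalRing.maximalIdeal _ _ h) ^ 2)) = 2 ∧
      Module.finrank ℂ
        (Submodule.restrictScalars ℂ ((@IsLocalRing.maximalIdeal _ _ h) ^ 3)) = 1 := by
  subst hI
  set Q := MvPolynomial (Fin 4) ℂ ⧸ JJ ε
  let e : Q ≃ₐ[ℂ] MM ε := eqv ε
  let f : MM ε ≃ₐ[ℂ] Q := e.symm
  haveI : Nontrivial Q := Equiv.nontrivial e.toEquiv
  haveI hloc : IsLocalRing Q :=
    IsLocalRing.of_surjective' (f : MM ε →+* Q) f.surjective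
  refine ⟨hloc, ?_, ?_, ?_, ?_⟩
  · rw [e.toLinearEquiv.finrank_eq, finrank_MM]
  · rw [← map_maximalIdeal f, finrank_restrict_map f, finrank_max]
  · rw [← map_maximalIdeal f, ← Ideal.map_pow, finrank_restrict_map f, finrank_sq]
  · rw [← map_maximalIdeal f, ← Ideal.map_pow, finrank_restrict_map f, finrank_cube]

/-- Each of `R₂` and `R₃′` is a commutative local ℂ-algebra of ℂ-dimension 5 whose maximal
ideal `𝔪` satisfies `dim_ℂ 𝔪 = 4`, `dim_ℂ 𝔪² = 2` and `dim_ℂ 𝔪³ = 1`. -/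
theorem stmt2 :
    (∃ h : IsLocalRing R2,
      Module.finrank ℂ R2 = 5 ∧
      Module.finrank ℂ
        (Submodule.restrictScalars ℂ (@IsLocalRing.maximalIdeal R2 _ h)) = 4 ∧
      Module.finrank ℂ
        (Submodule.restrictScalars ℂ ((@IsLocalRing.maximalIdeal R2 _ h) ^ 2)) = 2 ∧
      Module.finrank ℂ
        (Submodule.restrictScalars ℂ ((@IsLocalRing.maximalIdeal R2 _ h) ^ 3)) = 1) ∧
    (∃ h : IsLocalRing R3',
      Module.finrank ℂ R3' = 5 ∧
      Module.finrank ℂ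
        (Submodule.restrictScalars ℂ (@IsLocalRing.maximalIdeal R3' _ h)) = 4 ∧
      Module.finrank ℂ
        (Submodule.restrictScalars ℂ ((@IsLocalRing.maximalIdeal R3' _ h) ^ 2)) = 2 ∧
      Module.finrank ℂ
        (Submodule.restrictScalars ℂ ((@IsLocalRing.maximalIdeal R3' _ h) ^ 3)) = 1) :=
  ⟨main 0 I2 I2_eq_J0, main 1 I3' I3'_eq_J1⟩
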